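/- Let a, b, c : ℝ → ℝ be positive functions satisfying the Heisenberg Ricci flow ODE a' = -a²/(2bc), b' = a/(2c), c' = a/(2b). Then the following four 'Ricci-flatness' identities hold: a''/a + b''/b + c''/c = 0; a·(a'bc)'/(bc) = a⁴/(2b²c²); b·(b'ca)'/(ca) = -a²/(2c²); and c·(c'ab)'/(ab) = -a²/(2b²). -/

import Mathlib

/-- Ricci-flatness identities for the cohomogeneity-one metric over the Heisenberg group. -/
theorem heisenberg_ricci_flat_identities (a b c : ℝ → ℝ)
    (hapos : ∀ t, 0 < a t) (hbpos : ∀ t, 0 < b t) (hcpos : ∀ t, 0 < c t)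
    (ha : Differentiable ℝ a) (hb : Differentiable ℝ b) (hc : Differentiable ℝ c)
    (hda : ∀ t, deriv a t = -(a t) ^ 2 / (2 * b t * c t))
    (hdb : ∀ t, deriv b t = a t / (2 * c t))
    (hdc : ∀ t, deriv c t = a t / (2 * b t)) :
    ∀ t, deriv (deriv a) t / a t + deriv (deriv b) t / b t + deriv (deriv c) t / c t = 0 ∧
      a t * deriv (fun s => deriv a s * b s * c s) t / (b t * c t) =
        (a t) ^ 4 / (2 * (b t) ^ 2 * (c t) ^ 2) ∧
      b t * deriv (fun s => deriv b s * c s * a s) t / (c t * a t) =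
        -(a t) ^ 2 / (2 * (c t) ^ 2) ∧
      c t * deriv (fun s => deriv c s * a s * b s) t / (a t * b t) =
        -(a t) ^ 2 / (2 * (b t) ^ 2) := by
  intro t
  have ha0 : a t ≠ 0 := (hapos t).ne'
  have hb0 : b t ≠ 0 := (hbpos t).ne'
  have hc0 : c t ≠ 0 := (hcpos t).ne'
  have hA := (ha t).hasDerivAt
  have hB := (hb t).hasDerivAt
  have hC := (hc t).hasDerivAt
  have hbc0 : 2 * b t * c t ≠ 0 := (mul_pos (mul_pos two_pos (hbpos t)) (hcpos t)).ne'
  have hc20 : 2 * c t ≠ 0 := (mul_pos two_pos (hcpos t)).ne'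
  have hb20 : 2 * b t ≠ 0 := (mul_pos two_pos (hbpos t)).ne'
  have hda' : deriv a = fun s => -(a s) ^ 2 / (2 * b s * c s) := funext hda
  have hdb' : deriv b = fun s => a s / (2 * c s) := funext hdb
  have hdc' : deriv c = fun s => a s / (2 * b s) := funext hdc
  have hFa : HasDerivAt (fun s => -(a s) ^ 2 / (2 * b s * c s)) _ t := ((hA.pow 2).neg.div ((hB.const_mul 2).mul hC) hbc0)
  have hFb : HasDerivAt (fun s => a s / (2 * c s)) _ t := (hA.div (hC.const_mul 2) hc20)
  have hFc : HasDerivAt (fun s => a s / (2 * b s)) _ t := (hA.div (hB.const_mul 2) hb20)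
  have h1 : (fun s => deriv a s * b s * c s) = fun s => -(a s) ^ 2 / 2 := by
    funext s
    rw [hda s]
    have hb0' : b s ≠ 0 := (hbpos s).ne'
    have hc0' : c s ≠ 0 := (hcpos s).ne'
    field_simp
  have h2 : (fun s => deriv b s * c s * a s) = fun s => (a s) ^ 2 / 2 := by
    funext s
    rw [hdb s]
    have hc0' : c s ≠ 0 := (hcpos s).ne'
    field_simp
  have h3 : (fun s => deriv c s * a s * b s) = fun s => (a s) ^ 2 / 2 := by
    funext s
    rw [hdc s]
    have hb0' : b s ≠ 0 := (hbpos s).ne'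
    field_simp
  refine ⟨?_, ?_, ?_, ?_⟩
  · rw [hda', hdb', hdc', hFa.deriv, hFb.deriv, hFc.deriv, Pi.neg_apply, Pi.pow_apply, hda, hdb, hdc]
    field_simp
    ring
  · rw [h1, (show HasDerivAt (fun s => -(a s) ^ 2 / 2) _ t from (hA.pow 2).neg.div_const 2).deriv, hda]
    field_simp
    ring
  · rw [h2, (show HasDerivAt (fun s => (a s) ^ 2 / 2) _ t from (hA.pow 2).div_const 2).deriv, hda]
    field_simp
    ring
  · rw [h3, (show HasDerivAt (fun s => (a s) ^ 2 / 2) _ t from (hA.pow 2).div_const 2).deriv, hda]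
    field_simp
    ring
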